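/- arXiv:2008.13287 — 3 statements merged into one kernel-verified Lean document; each statement's English description precedes it below -/
import Mathlib

section
/- For every nonnegative integer s and all 1 ≤ k ≤ n, the s-th power of A satisfies [A^s]_{k,n} = (a_k/a_n)·(1/k!)·(d/dt)^n_{t=0}[ ((φ∘ω)^⟨s⟩(t))^k · ∏_{i=0}^{s-1} g(ω((φ∘ω)^⟨i⟩(t))) ], where the empty product (s = 0) equals 1. -/
open PowerSeries Finset

noncomputable section

/-- Product of two infinite matrices of complex numbers (indexed by positive integers,
upper triangular): `[A·B]_{k,n} = ∑_{j=k}^{n} [A]_{k,j}·[B]_{j,n}`. -/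
def triMul (A B : ℕ → ℕ → ℂ) : ℕ → ℕ → ℂ :=
  fun k n => ∑ j ∈ Finset.Icc k n, A k j * B j n

/-- The identity matrix. -/
def triId : ℕ → ℕ → ℂ := fun k n => if k = n then 1 else 0

/-- Powers of a matrix: `A^0 = I`, `A^{s+1} = A^s · A`. -/
def triPow (A : ℕ → ℕ → ℂ) : ℕ → ℕ → ℕ → ℂ
  | 0 => triId
  | s + 1 => triMul (triPow A s) A

/-- Composition `F ∘ G` of formal power series (intended for `G` with zero
constant coefficient): the coefficient of `t^n` is `∑_{j=0}^{n} F_j · [t^n](G^j)`. -/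
def psComp (F G : PowerSeries ℂ) : PowerSeries ℂ :=
  PowerSeries.mk fun n =>
    ∑ j ∈ Finset.range (n + 1), (PowerSeries.coeff j F) * (PowerSeries.coeff n (G ^ j))

/-- Iterated composition: `φ^⟨0⟩ = t`, `φ^⟨s+1⟩ = φ^⟨s⟩ ∘ φ`. -/
def iterComp (φ : PowerSeries ℂ) : ℕ → PowerSeries ℂ
  | 0 => PowerSeries.X
  | s + 1 => psComp (iterComp φ s) φ

lemma coeff_psComp (F G : PowerSeries ℂ) (n : ℕ) :
    coeff n (psComp F G) = ∑ j ∈ range (n + 1), coeff j F * coeff n (G ^ j) := by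
  simp [psComp]
lemma coeff_pow_eq_zero {G : PowerSeries ℂ} (hG : constantCoeff G = 0) {j n : ℕ}
    (h : n < j) : coeff n (G ^ j) = 0 := by
  obtain ⟨u, hu⟩ := (X_dvd_iff.mpr hG)
  have : G ^ j = u ^ j * X ^ j := by rw [hu]; ring
  rw [this, coeff_mul_X_pow', if_neg (by omega)]

lemma coeff_psComp_ext {G : PowerSeries ℂ} (hG : constantCoeff G = 0)
    (F : PowerSeries ℂ) {n m : ℕ} (hnm : n ≤ m) :
    coeff n (psComp F G) = ∑ j ∈ range (m + 1), coeff j F * coeff n (G ^ j) := by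
  rw [coeff_psComp]
  apply Finset.sum_subset (by intro x hx; simp at *; omega)
  intro j hj hjn
  simp only [mem_range, not_lt] at hj hjn
  rw [coeff_pow_eq_zero hG (by omega), mul_zero]

/-- master coefficient formula for `aeval` of a polynomial at a series with zero constant term -/
lemma coeff_aeval {G : PowerSeries ℂ} (hG : constantCoeff G = 0) (P : Polynomial ℂ)
    {n m : ℕ} (hnm : n ≤ m) :
    coeff n (Polynomial.aeval G P) = ∑ j ∈ range (m + 1), P.coeff j * coeff n (G ^ j) := by
  have base : ∀ N, coeff n (Polynomial.aeval G P)
      = ∑ j ∈ range (P.natDegree + 1 + N), P.coeff j * coeff n (G ^ j) := by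
    intro N
    rw [Polynomial.aeval_def, Polynomial.eval₂_eq_sum_range, map_sum]
    rw [← Finset.sum_subset (Finset.range_subset_range.mpr (by omega : P.natDegree + 1 ≤ P.natDegree + 1 + N))
      (fun j _ hj => by
        simp only [mem_range, not_lt] at hj
        rw [Polynomial.coeff_eq_zero_of_natDegree_lt (by omega)]; simp)]
    apply Finset.sum_congr rfl
    intro j _
    rw [PowerSeries.algebraMap_apply]
    simp [coeff_C_mul]
  rcases le_or_gt (P.natDegree + 1) (m + 1) with hle | hlt
  · have := base (m + 1 - (P.natDegree + 1))
    rwa [show P.natDegree + 1 + (m + 1 - (P.natDegree + 1)) = m + 1 by omega] at this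
  · rw [base 0]
    symm
    apply Finset.sum_subset (Finset.range_subset_range.mpr (by omega))
    intro j hj hjn
    simp only [mem_range, not_lt] at hj hjn
    rw [coeff_pow_eq_zero hG (by omega), mul_zero]

/-- `psComp` agrees with `aeval` of the truncation, in low coefficients. -/
lemma coeff_psComp_eq_aeval {G : PowerSeries ℂ} (hG : constantCoeff G = 0)
    (F : PowerSeries ℂ) {n m : ℕ} (hnm : n ≤ m) :
    coeff n (psComp F G) = coeff n (Polynomial.aeval G (trunc (m + 1) F)) := by
  rw [coeff_psComp_ext hG F hnm, coeff_aeval hG _ hnm]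
  apply Finset.sum_congr rfl
  intro j hj
  simp only [mem_range] at hj
  rw [coeff_trunc, if_pos hj]

lemma psComp_mul {G : PowerSeries ℂ} (hG : constantCoeff G = 0) (F₁ F₂ : PowerSeries ℂ) :
    psComp (F₁ * F₂) G = psComp F₁ G * psComp F₂ G := by
  ext n
  rw [coeff_psComp_eq_aeval hG _ (le_refl n)]
  rw [coeff_mul]
  have : ∀ x ∈ HasAntidiagonal.antidiagonal n,
      coeff x.1 (psComp F₁ G) * coeff x.2 (psComp F₂ G)
      = coeff x.1 (Polynomial.aeval G (trunc (n+1) F₁))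
        * coeff x.2 (Polynomial.aeval G (trunc (n+1) F₂)) := by
    intro x hx
    simp only [HasAntidiagonal.mem_antidiagonal] at hx
    rw [coeff_psComp_eq_aeval hG _ (by omega : x.1 ≤ n),
        coeff_psComp_eq_aeval hG _ (by omega : x.2 ≤ n)]
  rw [Finset.sum_congr rfl this, ← coeff_mul, ← map_mul]
  -- now both are coeff n of aeval of polynomials agreeing up to degree n
  rw [coeff_aeval hG _ (le_refl n), coeff_aeval hG _ (le_refl n)]
  apply Finset.sum_congr rfl
  intro j hj
  simp only [mem_range] at hj
  congr 1
  have h1 : (trunc (n+1) F₁ * trunc (n+1) F₂).coeff j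
      = (trunc (n+1) ((trunc (n+1) F₁ : PowerSeries ℂ) * (trunc (n+1) F₂ : PowerSeries ℂ))).coeff j := by
    rw [coeff_trunc, if_pos hj, ← Polynomial.coe_mul, Polynomial.coeff_coe]
  rw [h1, trunc_trunc_mul_trunc, coeff_trunc, if_pos hj]

lemma psComp_one (G : PowerSeries ℂ) : psComp 1 G = 1 := by
  ext n
  simp [coeff_psComp, coeff_one, Finset.sum_ite_eq']

lemma psComp_C (c : ℂ) (G : PowerSeries ℂ) : psComp (C c) G = C c := by
  ext n
  simp [coeff_psComp, coeff_C, Finset.sum_ite_eq']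

lemma psComp_add (F₁ F₂ G : PowerSeries ℂ) :
    psComp (F₁ + F₂) G = psComp F₁ G + psComp F₂ G := by
  ext n
  simp [coeff_psComp, add_mul, Finset.sum_add_distrib]

lemma psComp_C_mul (c : ℂ) (F G : PowerSeries ℂ) :
    psComp (C c * F) G = C c * psComp F G := by
  ext n
  simp [coeff_psComp, coeff_C_mul, Finset.mul_sum, mul_assoc]

lemma psComp_pow {G : PowerSeries ℂ} (hG : constantCoeff G = 0) (F : PowerSeries ℂ) (m : ℕ) :
    psComp (F ^ m) G = (psComp F G) ^ m := by
  induction m with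
  | zero => simpa using psComp_one G
  | succ m ih => rw [pow_succ, psComp_mul hG, ih, pow_succ]

lemma psComp_X {G : PowerSeries ℂ} (hG : constantCoeff G = 0) : psComp X G = G := by
  ext n
  rcases Nat.eq_zero_or_pos n with rfl | hn
  · simp [coeff_psComp, coeff_X, ← hG]
  · rw [coeff_psComp]
    rw [Finset.sum_eq_single 1]
    · simp
    · intro j hj hj1
      simp [coeff_X, hj1]
    · intro h1; exfalso; apply h1; simp; omega

lemma psComp_X_right (F : PowerSeries ℂ) : psComp F X = F := by
  ext n
  rw [coeff_psComp, Finset.sum_eq_single n]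
  · simp
  · intro j hj hjn; rw [coeff_X_pow, if_neg (fun h => hjn h.symm), mul_zero]
  · intro h; exfalso; apply h; simp

lemma constantCoeff_psComp (F G : PowerSeries ℂ) :
    constantCoeff (psComp F G) = constantCoeff F := by
  have := coeff_psComp F G 0
  simpa [coeff_zero_eq_constantCoeff] using this

lemma psComp_sum {G : PowerSeries ℂ} (s : Finset ℕ) (f : ℕ → PowerSeries ℂ) :
    psComp (∑ i ∈ s, f i) G = ∑ i ∈ s, psComp (f i) G := by
  induction s using Finset.cons_induction with
  | empty => ext n; simp [coeff_psComp]
  | cons a s ha ih => rw [Finset.sum_cons, psComp_add, ih, Finset.sum_cons]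

lemma psComp_prod {G : PowerSeries ℂ} (hG : constantCoeff G = 0) (s : Finset ℕ)
    (f : ℕ → PowerSeries ℂ) :
    psComp (∏ i ∈ s, f i) G = ∏ i ∈ s, psComp (f i) G := by
  induction s using Finset.cons_induction with
  | empty => simpa using psComp_one G
  | cons a s ha ih => rw [Finset.prod_cons, psComp_mul hG, ih, Finset.prod_cons]

lemma psComp_assoc {G H : PowerSeries ℂ} (hG : constantCoeff G = 0)
    (hH : constantCoeff H = 0) (F : PowerSeries ℂ) :
    psComp (psComp F G) H = psComp F (psComp G H) := by
  have hGH : constantCoeff (psComp G H) = 0 := by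
    rw [constantCoeff_psComp, hG]
  ext n
  rw [coeff_psComp, coeff_psComp_ext hGH F (le_refl n)]
  have : ∀ j ∈ range (n+1), coeff j (psComp F G) * coeff n (H ^ j)
      = ∑ i ∈ range (n+1), coeff i F * (coeff j (G ^ i) * coeff n (H ^ j)) := by
    intro j hj
    simp only [mem_range] at hj
    rw [coeff_psComp_ext hG F (by omega : j ≤ n), Finset.sum_mul]
    simp [mul_assoc]
  rw [Finset.sum_congr rfl this, Finset.sum_comm]
  apply Finset.sum_congr rfl
  intro i _
  rw [← Finset.mul_sum]
  congr 1
  rw [← psComp_pow hH]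
  exact (coeff_psComp_ext hH (G ^ i) (le_refl n)).symm

lemma coeff_derivativeFun_old (f : PowerSeries ℂ) (n : ℕ) :
    coeff n (derivativeFun f) = coeff (n + 1) f * (n + 1) := coeff_derivative f n

lemma derivativeFun_C_old (c : ℂ) : derivativeFun (C c : PowerSeries ℂ) = 0 := derivative_C

lemma derivativeFun_X' : derivativeFun (X : PowerSeries ℂ) = 1 := by
  ext n
  rw [coeff_derivativeFun_old, coeff_one, coeff_X]
  rcases Nat.eq_zero_or_pos n with rfl | hn
  · norm_num
  · rw [if_neg (by omega), if_neg (by omega), zero_mul]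

lemma derivativeFun_pow (f : PowerSeries ℂ) (m : ℕ) :
    derivativeFun (f ^ (m + 1)) = C ((m : ℂ) + 1) * (f ^ m * derivativeFun f) := by
  induction m with
  | zero => simp
  | succ m ih =>
    rw [pow_succ, derivativeFun_mul, ih]
    push_cast
    rw [show (C ((m : ℂ) + 1 + 1)) = C ((m : ℂ) + 1) + 1 by rw [map_add, map_one]]
    simp only [smul_eq_mul]
    ring

/-- Lemma D : expansion of `coeff N (f * P')` -/
lemma coeff_mul_derivativeFun (f P : PowerSeries ℂ) (N : ℕ) :
    coeff N (f * derivativeFun P)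
      = ∑ j ∈ range (N + 2), (j : ℂ) * coeff j P * coeff (N + 1 - j) f := by
  rw [Finset.sum_range_succ' (fun j => (j : ℂ) * coeff j P * coeff (N + 1 - j) f)]
  simp only [Nat.cast_zero, zero_mul, add_zero]
  rw [coeff_mul, Finset.Nat.sum_antidiagonal_eq_sum_range_succ_mk,
    ← Finset.sum_range_reflect (fun k => coeff k f * coeff (N - k) (derivativeFun P)) (N + 1)]
  apply Finset.sum_congr rfl
  intro j hj
  simp only [mem_range] at hj
  rw [show N + 1 - 1 - j = N - j from by omega, show N - (N - j) = j from by omega,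
    coeff_derivativeFun_old]
  push_cast
  ring

section Lag
variable {h : PowerSeries ℂ} (hh0 : constantCoeff h ≠ 0)

include hh0 in
lemma lemA (n m : ℕ) (hn : 1 ≤ n) (hm : 1 ≤ m) :
    coeff (n - 1) (h ^ n * derivativeFun ((X * h⁻¹) ^ m))
      = if m = n then (n : ℂ) else 0 := by
  obtain ⟨N, rfl⟩ := Nat.exists_eq_add_of_le hn
  obtain ⟨M, rfl⟩ := Nat.exists_eq_add_of_le hm
  set u := h⁻¹ with hu_def
  have hu : h * u = 1 := PowerSeries.mul_inv_cancel h hh0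
  have hpu : ∀ p : ℕ, h ^ p * u ^ p = 1 := fun p => by rw [← mul_pow, hu, one_pow]
  have hu' : h * derivativeFun u = -(u * derivativeFun h) := by
    have := derivativeFun_mul h u
    rw [hu, derivativeFun_one] at this
    simp only [smul_eq_mul] at this
    linear_combination -this
  simp only [show 1 + N = N + 1 from add_comm 1 N, show 1 + M = M + 1 from add_comm 1 M]
  have e1 : h ^ (N + 1) * derivativeFun ((X * u) ^ (M + 1))
      = C ((M : ℂ) + 1) * (X ^ M * (h ^ (N + 1) * u ^ (M + 1))
          + X ^ (M + 1) * (h ^ (N + 1) * u ^ M * derivativeFun u)) := by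
    rw [derivativeFun_pow, derivativeFun_mul, derivativeFun_X', mul_pow]
    simp only [smul_eq_mul]
    ring
  rw [show N + 1 - 1 = N from rfl, e1, coeff_C_mul, map_add]
  rcases lt_trichotomy (M + 1) (N + 1) with hlt | heq | hgt
  · -- m < n
    set P := N - M - 1 with hP
    have hp : N + 1 = (M + (P + 2)) := by omega
    have hA : h ^ (N + 1) * u ^ (M + 1) = h ^ (P + 1) := by
      have h1 : h ^ (N + 1) * u ^ (M + 1) = (h ^ (M + 1) * u ^ (M + 1)) * h ^ (P + 1) := by
        rw [hp]; ring
      rw [h1, hpu, one_mul]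
    have hB : h ^ (N + 1) * u ^ M * derivativeFun u = -(h ^ P * derivativeFun h) := by
      have h1 : h ^ (N + 1) * u ^ M * derivativeFun u
          = (h ^ M * u ^ M) * (h ^ (P + 1) * (h * derivativeFun u)) := by
        rw [hp]; ring
      rw [h1, hpu, hu', one_mul]
      have h2 : h ^ (P + 1) * -(u * derivativeFun h)
          = -(h ^ P * ((h * u) * derivativeFun h)) := by ring
      rw [h2, hu]; ring
    rw [hA, hB, coeff_X_pow_mul', if_pos (by omega : M ≤ N), coeff_X_pow_mul',
      if_pos (by omega : M + 1 ≤ N), if_neg (by omega)]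
    have key : coeff P (h ^ P * derivativeFun h) = coeff (P + 1) (h ^ (P + 1)) := by
      have hd := congrArg (coeff P) (derivativeFun_pow h P)
      rw [coeff_derivativeFun_old, coeff_C_mul] at hd
      have hPn : ((P : ℂ) + 1) ≠ 0 := Nat.cast_add_one_ne_zero P
      apply mul_left_cancel₀ hPn
      linear_combination -hd
    rw [show N - M = P + 1 from by omega, show N - (M + 1) = P from by omega, map_neg, key]
    ring
  · -- m = n
    have hMN : M = N := by omega
    subst hMN
    rw [hpu, coeff_X_pow_mul', if_pos (le_refl M), Nat.sub_self, coeff_X_pow_mul',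
      if_neg (by omega), if_pos rfl]
    simp
  · -- m > n
    rw [coeff_X_pow_mul', if_neg (by omega), coeff_X_pow_mul', if_neg (by omega),
      if_neg (by omega)]
    simp
end Lag

section Core
variable {h ω : PowerSeries ℂ} (hh0 : constantCoeff h ≠ 0)
  (hω0 : constantCoeff ω = 0) (hωe : ω = X * psComp h ω)

lemma constXu : constantCoeff (X * h⁻¹) = 0 := by
  rw [map_mul, constantCoeff_X, zero_mul]

include hh0 hω0 hωe in
lemma eq1 (m : ℕ) : psComp ((X * h⁻¹) ^ m) ω = X ^ m := by
  rw [psComp_pow hω0, psComp_mul hω0, psComp_X hω0]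
  have h1 : ω * psComp h⁻¹ ω = (X * psComp h ω) * psComp h⁻¹ ω := by rw [← hωe]
  rw [h1, mul_assoc, ← psComp_mul hω0, PowerSeries.mul_inv_cancel h hh0, psComp_one, mul_one]

include hh0 in
lemma cmm_ne (m : ℕ) : coeff m ((X * h⁻¹) ^ m) ≠ 0 := by
  rw [mul_pow]
  have h0 : coeff m ((X : PowerSeries ℂ) ^ m * h⁻¹ ^ m) = coeff 0 (h⁻¹ ^ m) := by
    simpa using coeff_X_pow_mul (h⁻¹ ^ m) m 0
  rw [h0, coeff_zero_eq_constantCoeff, map_pow, PowerSeries.constantCoeff_inv]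
  exact pow_ne_zero m (inv_ne_zero hh0)

include hh0 hω0 hωe in
lemma core (n : ℕ) (hn : 1 ≤ n) :
    ∀ j, 1 ≤ j → j ≤ n →
      (n : ℂ) * coeff n (ω ^ j) = (j : ℂ) * coeff (n - j) (h ^ n) := by
  set d : ℕ → ℂ := fun l =>
    (n : ℂ) * coeff n (ω ^ l) - (l : ℂ) * coeff (n - l) (h ^ n) with hd
  have claim : ∀ m, 1 ≤ m → m ≤ n →
      ∑ l ∈ range (n + 1), coeff l ((X * h⁻¹) ^ m) * d l = 0 := by
    intro m hm hmn
    have E1 : ∑ l ∈ range (n + 1), coeff l ((X * h⁻¹) ^ m) * ((n : ℂ) * coeff n (ω ^ l))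
        = (n : ℂ) * (if m = n then 1 else 0) := by
      have hX := congrArg (coeff n) (eq1 hh0 hω0 hωe m)
      rw [coeff_psComp, coeff_X_pow] at hX
      calc ∑ l ∈ range (n + 1), coeff l ((X * h⁻¹) ^ m) * ((n : ℂ) * coeff n (ω ^ l))
          = (n : ℂ) * ∑ l ∈ range (n + 1), coeff l ((X * h⁻¹) ^ m) * coeff n (ω ^ l) := by
            rw [Finset.mul_sum]; apply Finset.sum_congr rfl; intros; ring
        _ = (n : ℂ) * (if m = n then 1 else 0) := by
            rw [hX]
            congr 1
            rcases eq_or_ne m n with rfl | hne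
            · rfl
            · rw [if_neg hne, if_neg (fun hc => hne hc.symm)]
    have E2 : ∑ l ∈ range (n + 1), coeff l ((X * h⁻¹) ^ m) * ((l : ℂ) * coeff (n - l) (h ^ n))
        = (n : ℂ) * (if m = n then 1 else 0) := by
      obtain ⟨N, rfl⟩ := Nat.exists_eq_add_of_le hn
      have hD := coeff_mul_derivativeFun (h ^ (1 + N)) ((X * h⁻¹) ^ m) N
      have hA := lemA hh0 (1 + N) m (by omega) hm
      rw [show 1 + N - 1 = N from by omega] at hA
      rw [hA] at hD
      calc ∑ l ∈ range (1 + N + 1),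
            coeff l ((X * h⁻¹) ^ m) * ((l : ℂ) * coeff (1 + N - l) (h ^ (1 + N)))
          = ∑ l ∈ range (N + 2),
              (l : ℂ) * coeff l ((X * h⁻¹) ^ m) * coeff (N + 1 - l) (h ^ (1 + N)) := by
            apply Finset.sum_congr (by rw [show 1 + N + 1 = N + 2 from by omega])
            intro l _
            rw [show 1 + N - l = N + 1 - l from by omega]; ring
        _ = ((1 + N : ℕ) : ℂ) * (if m = 1 + N then 1 else 0) := by
            rw [← hD]; split_ifs <;> simp
    rw [hd]
    simp only [mul_sub]
    rw [Finset.sum_sub_distrib, E1, E2, sub_self]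
  -- downward induction
  have main : ∀ D j, 1 ≤ j → j ≤ n → n - j ≤ D → d j = 0 := by
    intro D
    induction D with
    | zero =>
      intro j hj1 hjn hD
      have hjn' : j = n := by omega
      have hc := claim j hj1 hjn
      rw [Finset.sum_eq_single j] at hc
      · exact (mul_eq_zero.mp hc).resolve_left (cmm_ne hh0 j)
      · intro l hl hlj
        simp only [mem_range] at hl
        rw [coeff_pow_eq_zero (constXu) (by omega), zero_mul]
      · intro hc'; exact absurd (by simp; omega : j ∈ range (n + 1)) hc'
    | succ D ih =>
      intro j hj1 hjn hD
      have hc := claim j hj1 hjn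
      rw [Finset.sum_eq_single j] at hc
      · exact (mul_eq_zero.mp hc).resolve_left (cmm_ne hh0 j)
      · intro l hl hlj
        simp only [mem_range] at hl
        rcases lt_or_gt_of_ne hlj with hlt | hgt
        · rw [coeff_pow_eq_zero (constXu) hlt, zero_mul]
        · rw [ih l (by omega) (by omega) (by omega), mul_zero]
      · intro hc'; exact absurd (by simp; omega : j ∈ range (n + 1)) hc'
  intro j hj1 hjn
  have := main (n - j) j hj1 hjn (le_refl _)
  rw [hd] at this
  simp only [sub_eq_zero] at this
  exact this

include hh0 hω0 hωe in
lemma lagrange (n : ℕ) (hn : 1 ≤ n) (R : PowerSeries ℂ) :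
    coeff (n - 1) (h ^ n * derivativeFun R) = (n : ℂ) * coeff n (psComp R ω) := by
  obtain ⟨N, rfl⟩ := Nat.exists_eq_add_of_le hn
  have hD := coeff_mul_derivativeFun (h ^ (1 + N)) R N
  rw [show 1 + N - 1 = N from by omega, hD, coeff_psComp, Finset.mul_sum,
    show N + 2 = 1 + N + 1 from by omega]
  apply Finset.sum_congr rfl
  intro j hj
  simp only [mem_range] at hj
  rcases Nat.eq_zero_or_pos j with rfl | hjpos
  · simp only [Nat.cast_zero, zero_mul, pow_zero]
    rw [coeff_one, if_neg (by omega)]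
    ring
  · have := core hh0 hω0 hωe (1 + N) hn j hjpos (by omega)
    rw [show N + 1 - j = 1 + N - j from by omega]
    linear_combination (-(coeff j R)) * this
end Core


lemma derivativeFun_zero' : derivativeFun (0 : PowerSeries ℂ) = 0 := by
  ext n
  rw [coeff_derivativeFun_old]
  simp

lemma derivativeFun_sum (s : Finset ℕ) (f : ℕ → PowerSeries ℂ) :
    derivativeFun (∑ i ∈ s, f i) = ∑ i ∈ s, derivativeFun (f i) := by
  induction s using Finset.cons_induction with
  | empty => simpa using derivativeFun_zero'
  | cons a s ha ih => rw [Finset.sum_cons, derivativeFun_add, ih, Finset.sum_cons]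

lemma derivativeFun_C_mul (c : ℂ) (P : PowerSeries ℂ) :
    derivativeFun (C c * P) = C c * derivativeFun P := by
  rw [derivativeFun_mul, derivativeFun_C_old c]
  simp only [smul_eq_mul, mul_zero, smul_zero]
  ring

lemma coeff_pow_mul_lowzero {F P : PowerSeries ℂ} (hF : constantCoeff F = 0)
    {j k : ℕ} (hjk : j < k) : coeff j (F ^ k * P) = 0 := by
  rw [coeff_mul]
  apply Finset.sum_eq_zero
  intro x hx
  simp only [HasAntidiagonal.mem_antidiagonal] at hx
  rw [coeff_pow_eq_zero hF (by omega : x.1 < k), zero_mul]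

/-- Theorem: the `s`-th power of the matrix with entries
`[A]_{k,n} = (a_k/a_n)·(1/k!)·(d/dt)^{n-1}_{t=0}[h(t)^n · (d/dt)(φ(t)^k g(t))]`
is given by
`[A^s]_{k,n} = (a_k/a_n)·(1/k!)·(d/dt)^n_{t=0}[((φ∘ω)^⟨s⟩(t))^k · ∏_{i=0}^{s-1} g(ω((φ∘ω)^⟨i⟩(t)))]`,
where `ω(t) = t·h(ω(t))`, `ω(0) = 0`. -/
theorem stmt1 (a : ℕ → ℂ) (ha : ∀ n, 1 ≤ n → a n ≠ 0)
    (φ g h : PowerSeries ℂ)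
    (hφ0 : constantCoeff φ = 0)
    (hne : constantCoeff (derivativeFun φ) * constantCoeff g * constantCoeff h ≠ 0)
    (ω : PowerSeries ℂ) (hω0 : constantCoeff ω = 0)
    (hω : ω = PowerSeries.X * psComp h ω)
    (A : ℕ → ℕ → ℂ)
    (hAtri : ∀ k n, n < k → A k n = 0)
    (hA : ∀ k n, 1 ≤ k → k ≤ n →
      A k n = a k / a n * (1 / k.factorial) *
        (((n - 1).factorial : ℂ) * coeff (n - 1) (h ^ n * derivativeFun (φ ^ k * g))))
    (s : ℕ) (k n : ℕ) (hk : 1 ≤ k) (hkn : k ≤ n) :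
    triPow A s k n = a k / a n * (1 / k.factorial) *
      ((n.factorial : ℂ) * coeff n ((iterComp (psComp φ ω) s) ^ k *
        ∏ i ∈ Finset.range s, psComp (psComp g ω) (iterComp (psComp φ ω) i))) := by
  have hh0 : constantCoeff h ≠ 0 := fun hc => hne (by rw [hc, mul_zero])
  have hΦ0 : constantCoeff (psComp φ ω) = 0 := by rw [constantCoeff_psComp, hφ0]
  have hFs0 : ∀ t, constantCoeff (iterComp (psComp φ ω) t) = 0 := by
    intro t
    induction t with
    | zero => exact constantCoeff_X
    | succ t iht =>
      show constantCoeff (psComp _ _) = 0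
      rw [constantCoeff_psComp]
      exact iht
  induction s generalizing k n hk hkn with
  | zero =>
    have hn1 : 1 ≤ n := le_trans hk hkn
    show triId k n = _
    rw [show iterComp (psComp φ ω) 0 = (X : PowerSeries ℂ) from rfl, Finset.range_zero,
      Finset.prod_empty, mul_one, coeff_X_pow]
    rcases eq_or_ne k n with rfl | hne'
    · rw [if_pos rfl]
      have hak := ha k hk
      have hf : ((k.factorial : ℂ)) ≠ 0 := Nat.cast_ne_zero.mpr (Nat.factorial_ne_zero k)
      simp only [triId, if_pos rfl, ↓reduceIte]
      field_simp
    · rw [if_neg (fun hc => hne' hc.symm)]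
      simp [triId, hne']
  | succ s ih =>
    have hn1 : 1 ≤ n := le_trans hk hkn
    set Φ := psComp φ ω with hΦdef
    set Gg := psComp g ω with hGgdef
    set Q := iterComp Φ s ^ k * ∏ i ∈ range s, psComp Gg (iterComp Φ i) with hQdef
    set D : ℕ → ℂ := fun j => coeff (n - 1) (h ^ n * derivativeFun (φ ^ j * g)) with hDdef
    have key0 : ∀ j, j < k → coeff j Q = 0 := fun j hj =>
      coeff_pow_mul_lowzero (hFs0 s) hj
    have e1 : ∀ j ∈ Icc k n, triPow A s k j * A j n
        = a k / a n * (1 / k.factorial) * ((n - 1).factorial : ℂ) *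
          (coeff j Q * D j) := by
      intro j hj
      simp only [mem_Icc] at hj
      have hj1 : 1 ≤ j := le_trans hk hj.1
      rw [ih k j hk hj.1, hA j n hj1 hj.2]
      have haj := ha j hj1
      have han := ha n hn1
      have hfj : ((j.factorial : ℂ)) ≠ 0 := Nat.cast_ne_zero.mpr (Nat.factorial_ne_zero j)
      have hfk : ((k.factorial : ℂ)) ≠ 0 := Nat.cast_ne_zero.mpr (Nat.factorial_ne_zero k)
      rw [hDdef]
      field_simp
      ring
    have e2 : ∑ j ∈ Icc k n, coeff j Q * D j = ∑ j ∈ range (n + 1), coeff j Q * D j := by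
      apply Finset.sum_subset
      · intro j hj; simp only [mem_Icc, mem_range] at *; omega
      · intro j hjr hjn
        simp only [mem_range] at hjr
        simp only [mem_Icc, not_and, not_le] at hjn
        rw [key0 j (by by_contra hc; exact absurd (hjn (by omega)) (by omega)), zero_mul]
    set Rq := (∑ j ∈ range (n + 1), C (coeff j Q) * φ ^ j) * g with hRqdef
    have e3 : ∑ j ∈ range (n + 1), coeff j Q * D j
        = coeff (n - 1) (h ^ n * derivativeFun Rq) := by
      have hRq : Rq = ∑ j ∈ range (n + 1), C (coeff j Q) * (φ ^ j * g) := by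
        rw [hRqdef, Finset.sum_mul]
        apply Finset.sum_congr rfl
        intros; ring
      rw [hRq, derivativeFun_sum, Finset.mul_sum, map_sum]
      apply Finset.sum_congr rfl
      intro j _
      rw [derivativeFun_C_mul,
        show h ^ n * (C (coeff j Q) * derivativeFun (φ ^ j * g))
          = C (coeff j Q) * (h ^ n * derivativeFun (φ ^ j * g)) from by ring,
        coeff_C_mul]
    have e4 := lagrange hh0 hω0 hω n hn1 Rq
    have e5 : psComp Rq ω = (∑ j ∈ range (n + 1), C (coeff j Q) * Φ ^ j) * Gg := by
      rw [hRqdef, psComp_mul hω0, psComp_sum]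
      congr 1
      apply Finset.sum_congr rfl
      intro j _
      rw [psComp_C_mul, psComp_pow hω0]
    have e6 : coeff n ((∑ j ∈ range (n + 1), C (coeff j Q) * Φ ^ j) * Gg)
        = coeff n (psComp Q Φ * Gg) := by
      rw [coeff_mul, coeff_mul]
      apply Finset.sum_congr rfl
      intro x hx
      have hx1 : x.1 ≤ n := by
        simp only [HasAntidiagonal.mem_antidiagonal] at hx; omega
      congr 1
      rw [map_sum, coeff_psComp_ext hΦ0 Q hx1]
      apply Finset.sum_congr rfl
      intro j _
      rw [coeff_C_mul]
    have e7 : psComp Q Φ = iterComp Φ (s + 1) ^ k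
        * ∏ i ∈ range s, psComp Gg (iterComp Φ (i + 1)) := by
      rw [hQdef, psComp_mul hΦ0, psComp_pow hΦ0, psComp_prod hΦ0]
      congr 1
      apply Finset.prod_congr rfl
      intro i _
      rw [psComp_assoc (hFs0 i) hΦ0]
      rfl
    have e8 : iterComp Φ (s + 1) ^ k * (∏ i ∈ range s, psComp Gg (iterComp Φ (i + 1))) * Gg
        = iterComp Φ (s + 1) ^ k * ∏ i ∈ range (s + 1), psComp Gg (iterComp Φ i) := by
      rw [Finset.prod_range_succ',
        show psComp Gg (iterComp Φ 0) = Gg from psComp_X_right Gg]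
      ring
    have hfac : ((n - 1).factorial : ℂ) * (n : ℂ) = (n.factorial : ℂ) := by
      rw_mod_cast [mul_comm]
      exact_mod_cast congrArg (Nat.cast : ℕ → ℂ) (Nat.mul_factorial_pred (by omega))
    calc triPow A (s + 1) k n
        = ∑ j ∈ Icc k n, triPow A s k j * A j n := rfl
      _ = ∑ j ∈ Icc k n, a k / a n * (1 / k.factorial) * ((n - 1).factorial : ℂ) *
            (coeff j Q * D j) := Finset.sum_congr rfl e1
      _ = a k / a n * (1 / k.factorial) * ((n - 1).factorial : ℂ) *
            ∑ j ∈ Icc k n, coeff j Q * D j := by rw [Finset.mul_sum]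
      _ = a k / a n * (1 / k.factorial) * ((n - 1).factorial : ℂ) *
            coeff (n - 1) (h ^ n * derivativeFun Rq) := by rw [e2, e3]
      _ = a k / a n * (1 / k.factorial) * ((n - 1).factorial : ℂ) *
            ((n : ℂ) * coeff n (psComp Rq ω)) := by rw [e4]
      _ = a k / a n * (1 / k.factorial) * ((n - 1).factorial : ℂ) *
            ((n : ℂ) * coeff n (psComp Q Φ * Gg)) := by rw [e5, e6]
      _ = a k / a n * (1 / k.factorial) * ((n - 1).factorial : ℂ) *
            ((n : ℂ) * coeff n (iterComp Φ (s + 1) ^ k *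
              ∏ i ∈ range (s + 1), psComp Gg (iterComp Φ i))) := by
            rw [e7, e8]
      _ = a k / a n * (1 / k.factorial) *
            ((n.factorial : ℂ) * coeff n (iterComp Φ (s + 1) ^ k *
              ∏ i ∈ range (s + 1), psComp Gg (iterComp Φ i))) := by
            rw [← hfac]; ring
end
end

section
/- Let ψ = φ^⟨-1⟩ be the compositional inverse of φ (so ψ(0) = 0, ψ∘φ = φ∘ψ = t), and let B be the upper triangular matrix with entries [B]_{k,n} = (a_k/a_n)·(1/k!)·(d/dt)^n_{t=0}[ (ψ(t)/h(ψ(t)))^k · (g(ψ(t)))^{-1} ] for 1 ≤ k ≤ n, where (g∘ψ)^{-1} denotes the multiplicative inverse of the power series g∘ψ (which exists since g(0) ≠ 0), and ψ/(h∘ψ) denotes ψ multiplied by the multiplicative inverse of h∘ψ (which exists since h(0) ≠ 0). Then A·B = B·A = I. -/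
open PowerSeries Finset

noncomputable section

namespace Aux

lemma coeff_derivativeFun' (f : PowerSeries ℂ) (n : ℕ) :
    coeff n (derivativeFun f) = coeff (n + 1) f * (n + 1) :=
  PowerSeries.coeff_derivative f n

lemma derivativeFun_C' (r : ℂ) : derivativeFun (PowerSeries.C r) = 0 :=
  PowerSeries.derivative_C

lemma coeff_zero_of_X_pow_dvd {F : PowerSeries ℂ} {k n : ℕ} (hd : (PowerSeries.X)^k ∣ F)
    (hn : n < k) : coeff n F = 0 := by
  obtain ⟨r, rfl⟩ := hd
  rw [PowerSeries.coeff_X_pow_mul']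
  simp [not_le.mpr hn]

lemma coeff_pow_eq_zero {G : PowerSeries ℂ} (hG : constantCoeff G = 0) {n j : ℕ}
    (hn : n < j) : coeff n (G ^ j) = 0 := by
  apply coeff_zero_of_X_pow_dvd (pow_dvd_pow_of_dvd (PowerSeries.X_dvd_iff.mpr hG) j) hn

lemma coeff_psComp (F G : PowerSeries ℂ) (n : ℕ) :
    coeff n (psComp F G) = ∑ j ∈ range (n + 1), coeff j F * coeff n (G ^ j) := by
  simp [psComp]

lemma coeff_eval₂ {G : PowerSeries ℂ} (hG : constantCoeff G = 0) (p : Polynomial ℂ) (n : ℕ) :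
    coeff n (p.eval₂ (PowerSeries.C) G) =
      ∑ i ∈ range (n + 1), p.coeff i * coeff n (G ^ i) := by
  have hd : p.natDegree < max (p.natDegree + 1) (n + 1) :=
    lt_of_lt_of_le (Nat.lt_succ_self _) (le_max_left _ _)
  rw [Polynomial.eval₂_eq_sum_range' _ hd, map_sum,
    ← Finset.sum_subset (Finset.range_subset_range.mpr (le_max_right (p.natDegree + 1) (n + 1)))]
  · exact Finset.sum_congr rfl fun i _ => by rw [PowerSeries.coeff_C_mul]
  · intro i _ hi
    rw [Finset.mem_range, not_lt] at hi
    rw [PowerSeries.coeff_C_mul, coeff_pow_eq_zero hG (Nat.lt_of_succ_le hi), mul_zero]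

lemma coeff_psComp_eval₂ {G : PowerSeries ℂ} (hG : constantCoeff G = 0) (F : PowerSeries ℂ)
    {n N : ℕ} (hn : n < N) :
    coeff n (psComp F G) = coeff n ((PowerSeries.trunc N F).eval₂ (PowerSeries.C) G) := by
  rw [coeff_eval₂ hG, coeff_psComp]
  refine Finset.sum_congr rfl fun i hi => ?_
  rw [Finset.mem_range] at hi
  rw [PowerSeries.coeff_trunc, if_pos (lt_of_lt_of_le hi hn)]

lemma constantCoeff_psComp (F G : PowerSeries ℂ) :
    constantCoeff (psComp F G) = constantCoeff F := by
  have := coeff_psComp F G 0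
  simp only [PowerSeries.coeff_zero_eq_constantCoeff] at this
  simpa using this

lemma psComp_one (G : PowerSeries ℂ) : psComp 1 G = 1 := by
  ext n
  rw [coeff_psComp]
  rw [Finset.sum_eq_single 0]
  · simp
  · intro j _ hj
    rw [PowerSeries.coeff_one, if_neg hj, zero_mul]
  · simp

lemma psComp_X_right (F : PowerSeries ℂ) : psComp F PowerSeries.X = F := by
  ext n
  rw [coeff_psComp, Finset.sum_eq_single n]
  · simp [PowerSeries.coeff_X_pow]
  · intro j _ hj
    rw [PowerSeries.coeff_X_pow, if_neg (fun hh => hj hh.symm), mul_zero]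
  · intro hn
    exact absurd (Finset.self_mem_range_succ n) hn

lemma psComp_mul {G : PowerSeries ℂ} (hG : constantCoeff G = 0) (F₁ F₂ : PowerSeries ℂ) :
    psComp (F₁ * F₂) G = psComp F₁ G * psComp F₂ G := by
  ext n
  set P := PowerSeries.trunc (n+1) F₁ with hP
  set Q := PowerSeries.trunc (n+1) F₂ with hQ
  have key : coeff n (psComp (F₁ * F₂) G) = coeff n ((P * Q).eval₂ (PowerSeries.C) G) := by
    rw [coeff_psComp, coeff_eval₂ hG]
    refine Finset.sum_congr rfl fun i hi => ?_
    rw [Finset.mem_range] at hi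
    congr 1
    rw [PowerSeries.coeff_mul, Polynomial.coeff_mul]
    refine Finset.sum_congr rfl fun x hx => ?_
    rw [Finset.HasAntidiagonal.mem_antidiagonal] at hx
    have hx1 : x.1 < n + 1 := by omega
    have hx2 : x.2 < n + 1 := by omega
    rw [hP, hQ, PowerSeries.coeff_trunc, PowerSeries.coeff_trunc, if_pos hx1, if_pos hx2]
  rw [key, Polynomial.eval₂_mul, PowerSeries.coeff_mul, PowerSeries.coeff_mul]
  refine Finset.sum_congr rfl fun x hx => ?_
  rw [Finset.HasAntidiagonal.mem_antidiagonal] at hx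
  have hx1 : x.1 < n + 1 := by omega
  have hx2 : x.2 < n + 1 := by omega
  rw [coeff_psComp_eval₂ hG F₁ hx1, coeff_psComp_eval₂ hG F₂ hx2]

lemma psComp_pow {G : PowerSeries ℂ} (hG : constantCoeff G = 0) (F : PowerSeries ℂ) (m : ℕ) :
    psComp (F ^ m) G = (psComp F G) ^ m := by
  induction m with
  | zero => simpa using psComp_one G
  | succ m ih => rw [pow_succ, pow_succ, psComp_mul hG, ih]

lemma psComp_assoc {G H : PowerSeries ℂ} (hG : constantCoeff G = 0)
    (hH : constantCoeff H = 0) (F : PowerSeries ℂ) :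
    psComp (psComp F G) H = psComp F (psComp G H) := by
  ext n
  rw [coeff_psComp, coeff_psComp]
  have lhs : ∀ j, coeff j (psComp F G) * coeff n (H ^ j) =
      ∑ i ∈ range (j + 1), coeff i F * coeff j (G ^ i) * coeff n (H ^ j) := by
    intro j; rw [coeff_psComp, Finset.sum_mul]
  calc ∑ j ∈ range (n+1), coeff j (psComp F G) * coeff n (H ^ j)
      = ∑ j ∈ range (n+1), ∑ i ∈ range (n+1),
          coeff i F * coeff j (G ^ i) * coeff n (H ^ j) := by
        refine Finset.sum_congr rfl fun j hj => ?_
        rw [Finset.mem_range] at hj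
        rw [lhs j]
        refine Finset.sum_subset (Finset.range_subset_range.mpr (by omega)) fun i _ hi => ?_
        rw [Finset.mem_range, not_lt] at hi
        rw [coeff_pow_eq_zero hG (Nat.lt_of_succ_le hi), mul_zero, zero_mul]
    _ = ∑ i ∈ range (n+1), coeff i F * coeff n ((psComp G H) ^ i) := by
        rw [Finset.sum_comm]
        refine Finset.sum_congr rfl fun i _ => ?_
        rw [← psComp_pow hH, coeff_psComp, Finset.mul_sum]
        refine Finset.sum_congr rfl fun j _ => ?_
        ring

lemma psComp_inv {F G : PowerSeries ℂ} (hF : constantCoeff F ≠ 0)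
    (hG : constantCoeff G = 0) : psComp F⁻¹ G = (psComp F G)⁻¹ := by
  have hc : constantCoeff (psComp F G) ≠ 0 := by
    rw [constantCoeff_psComp]; exact hF
  rw [PowerSeries.eq_inv_iff_mul_eq_one hc, ← psComp_mul hG,
    PowerSeries.inv_mul_cancel _ hF, psComp_one]

lemma derivativeFun_zero' : derivativeFun (0 : PowerSeries ℂ) = 0 := by
  ext n; rw [coeff_derivativeFun']; simp

lemma derivativeFun_sum {α : Type*} (s : Finset α) (f : α → PowerSeries ℂ) :
    derivativeFun (∑ i ∈ s, f i) = ∑ i ∈ s, derivativeFun (f i) := by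
  classical
  induction s using Finset.induction_on with
  | empty => simpa using derivativeFun_zero'
  | insert _ _ hx ih =>
    rw [Finset.sum_insert hx, Finset.sum_insert hx, PowerSeries.derivativeFun_add, ih]

lemma derivativeFun_C_mul (a : ℂ) (f : PowerSeries ℂ) :
    derivativeFun (PowerSeries.C a * f) = PowerSeries.C a * derivativeFun f := by
  rw [PowerSeries.derivativeFun_mul, derivativeFun_C']
  rw [smul_eq_mul, smul_eq_mul, mul_zero, add_zero]

lemma derivativeFun_pow (f : PowerSeries ℂ) (m : ℕ) :
    derivativeFun (f ^ (m + 1)) = PowerSeries.C ((m : ℂ) + 1) * (f ^ m * derivativeFun f) := by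
  induction m with
  | zero => simp
  | succ m ih =>
    rw [pow_succ, PowerSeries.derivativeFun_mul, ih, smul_eq_mul, smul_eq_mul]
    simp only [Nat.cast_add, Nat.cast_one, map_add, map_one]
    ring

lemma derivativeFun_X_pow (k : ℕ) (hk : 1 ≤ k) :
    derivativeFun ((PowerSeries.X : PowerSeries ℂ) ^ k) =
      PowerSeries.C (k : ℂ) * PowerSeries.X ^ (k - 1) := by
  obtain ⟨m, rfl⟩ : ∃ m, k = m + 1 := ⟨k - 1, by omega⟩
  have hX : derivativeFun (PowerSeries.X : PowerSeries ℂ) = 1 := PowerSeries.derivative_X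
  rw [derivativeFun_pow, hX]
  simp

lemma pow_mul_inv_pow {h : PowerSeries ℂ} (hh : constantCoeff h ≠ 0) {k n : ℕ} (hkn : k ≤ n) :
    h ^ n * (h⁻¹) ^ k = h ^ (n - k) := by
  obtain ⟨m, rfl⟩ : ∃ m, n = m + k := ⟨n - k, by omega⟩
  rw [pow_add, mul_assoc, ← mul_pow, PowerSeries.mul_inv_cancel _ hh, one_pow, mul_one]
  congr 1; omega

lemma derivativeFun_inv' {h : PowerSeries ℂ} (hh : constantCoeff h ≠ 0) :
    derivativeFun (h⁻¹) = -((h⁻¹) ^ 2 * derivativeFun h) := by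
  have h1 : h * h⁻¹ = 1 := PowerSeries.mul_inv_cancel _ hh
  have h2 := congrArg derivativeFun h1
  rw [PowerSeries.derivativeFun_mul, PowerSeries.derivativeFun_one, smul_eq_mul,
    smul_eq_mul] at h2
  linear_combination h⁻¹ * h2 - h⁻¹.derivativeFun * h1

lemma coeff_pred_pow_mul_deriv {h : PowerSeries ℂ} (m : ℕ) (hm : 1 ≤ m) :
    coeff (m - 1) (h ^ (m - 1) * derivativeFun h) = coeff m (h ^ m) := by
  obtain ⟨p, rfl⟩ : ∃ p, m = p + 1 := ⟨m - 1, by omega⟩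
  simp only [Nat.add_sub_cancel]
  have h1 := coeff_derivativeFun' (h ^ (p + 1)) p
  rw [derivativeFun_pow, PowerSeries.coeff_C_mul] at h1
  have hne : ((p : ℂ) + 1) ≠ 0 := Nat.cast_add_one_ne_zero p
  have h2 : ((p : ℂ) + 1) * coeff p (h ^ p * derivativeFun h) =
      ((p : ℂ) + 1) * coeff (p + 1) (h ^ (p + 1)) := by linear_combination h1
  exact mul_left_cancel₀ hne h2

lemma pow_add_mul_inv_pow {h : PowerSeries ℂ} (hh : constantCoeff h ≠ 0) (m k : ℕ) :
    h ^ (m + k) * (h⁻¹) ^ k = h ^ m := by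
  rw [pow_add, mul_assoc, ← mul_pow, PowerSeries.mul_inv_cancel _ hh, one_pow, mul_one]

lemma coeff_pow_mul_deriv (h : PowerSeries ℂ) (p : ℕ) :
    coeff p (h ^ p * derivativeFun h) = coeff (p + 1) (h ^ (p + 1)) := by
  have h1 := coeff_derivativeFun' (h ^ (p + 1)) p
  rw [derivativeFun_pow, PowerSeries.coeff_C_mul] at h1
  have hne : ((p : ℂ) + 1) ≠ 0 := Nat.cast_add_one_ne_zero p
  have h2 : ((p : ℂ) + 1) * coeff p (h ^ p * derivativeFun h) =
      ((p : ℂ) + 1) * coeff (p + 1) (h ^ (p + 1)) := by linear_combination h1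
  exact mul_left_cancel₀ hne h2

lemma key_coeff {h : PowerSeries ℂ} (hh : constantCoeff h ≠ 0) (K M : ℕ) :
    coeff (K + M) ((h ^ (K + 1 + M)) *
        derivativeFun (PowerSeries.X ^ (K + 1) * (h⁻¹) ^ (K + 1))) =
      if K + 1 = K + 1 + M then ((K : ℂ) + 1) else 0 := by
  have hX : derivativeFun (PowerSeries.X : PowerSeries ℂ) = 1 := PowerSeries.derivative_X
  rw [PowerSeries.derivativeFun_mul, smul_eq_mul, smul_eq_mul, mul_add, map_add]
  have hterm2 : coeff (K + M)
      (h ^ (K + 1 + M) * ((h⁻¹) ^ (K + 1) * derivativeFun (PowerSeries.X ^ (K + 1)))) =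
      ((K : ℂ) + 1) * coeff M (h ^ M) := by
    have hcol := pow_add_mul_inv_pow hh M (K + 1)
    have E2 : h ^ (K + 1 + M) * ((h⁻¹) ^ (K + 1) * derivativeFun (PowerSeries.X ^ (K + 1))) =
        PowerSeries.C ((K : ℂ) + 1) * (PowerSeries.X ^ K * h ^ M) := by
      rw [derivativeFun_pow, hX]
      linear_combination (PowerSeries.C ((K : ℂ) + 1) * (PowerSeries.X ^ K * 1)) * hcol
    rw [E2, PowerSeries.coeff_C_mul, show K + M = M + K from by ring,
      PowerSeries.coeff_X_pow_mul]
  cases M with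
  | zero =>
    have hterm1 : coeff (K + 0)
        (h ^ (K + 1 + 0) * (PowerSeries.X ^ (K + 1) * derivativeFun ((h⁻¹) ^ (K + 1)))) = 0 := by
      rw [mul_left_comm, PowerSeries.coeff_X_pow_mul', if_neg (by omega)]
    rw [hterm1, hterm2, if_pos rfl]
    simp
  | succ M' =>
    have hDhi : derivativeFun ((h⁻¹ : PowerSeries ℂ) ^ (K + 1)) =
        PowerSeries.C ((K : ℂ) + 1) * ((h⁻¹) ^ K * (-((h⁻¹) ^ 2 * derivativeFun h))) := by
      rw [derivativeFun_pow, derivativeFun_inv' hh]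
    have hcol := pow_add_mul_inv_pow hh M' (K + 2)
    have E1 : h ^ (K + 1 + (M' + 1)) *
        (PowerSeries.X ^ (K + 1) * derivativeFun ((h⁻¹) ^ (K + 1))) =
        -(PowerSeries.C ((K : ℂ) + 1) *
          (PowerSeries.X ^ (K + 1) * (h ^ M' * derivativeFun h))) := by
      rw [hDhi]
      linear_combination (-(PowerSeries.C ((K : ℂ) + 1) *
        (PowerSeries.X ^ (K + 1) * derivativeFun h))) * hcol
    rw [E1, hterm2, map_neg, PowerSeries.coeff_C_mul,
      show K + (M' + 1) = M' + (K + 1) from by ring, PowerSeries.coeff_X_pow_mul,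
      coeff_pow_mul_deriv, if_neg (by omega)]
    ring

lemma agree_coeff_mul {P Q R : PowerSeries ℂ} {n : ℕ}
    (hagree : ∀ m ≤ n, coeff m P = coeff m Q) :
    ∀ m ≤ n, coeff m (P * R) = coeff m (Q * R) := by
  intro m hm
  rw [PowerSeries.coeff_mul, PowerSeries.coeff_mul]
  refine Finset.sum_congr rfl fun x hx => ?_
  rw [Finset.HasAntidiagonal.mem_antidiagonal] at hx
  rw [hagree x.1 (by omega)]

lemma coeff_hn_deriv_congr {P Q R h : PowerSeries ℂ} {n : ℕ} (hn : 1 ≤ n)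
    (hagree : ∀ m ≤ n, coeff m P = coeff m Q) :
    coeff (n - 1) (h ^ n * derivativeFun (P * R)) =
      coeff (n - 1) (h ^ n * derivativeFun (Q * R)) := by
  have h1 := agree_coeff_mul (R := R) hagree
  rw [PowerSeries.coeff_mul, PowerSeries.coeff_mul]
  refine Finset.sum_congr rfl fun x hx => ?_
  rw [Finset.HasAntidiagonal.mem_antidiagonal] at hx
  congr 1
  rw [coeff_derivativeFun', coeff_derivativeFun',
    h1 (x.2 + 1) (by omega)]

lemma BA_sum {φ g h ψ : PowerSeries ℂ} (hφ0 : constantCoeff φ = 0)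
    (hψ0 : constantCoeff ψ = 0) (hg : constantCoeff g ≠ 0)
    (hh : constantCoeff h ≠ 0) (hψφ : psComp ψ φ = PowerSeries.X)
    {k n : ℕ} (hk : 1 ≤ k) (hkn : k ≤ n) :
    ∑ j ∈ Finset.Icc k n,
        coeff j ((ψ * (psComp h ψ)⁻¹) ^ k * (psComp g ψ)⁻¹) *
        coeff (n - 1) (h ^ n * derivativeFun (φ ^ j * g)) =
      if k = n then (k : ℂ) else 0 := by
  have hn : 1 ≤ n := le_trans hk hkn
  set U : PowerSeries ℂ := ψ * (psComp h ψ)⁻¹ with hU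
  set E : PowerSeries ℂ := U ^ k * (psComp g ψ)⁻¹ with hE
  set d : ℕ → ℂ := fun j => coeff j E with hd
  set e : ℕ → ℂ := fun j => coeff (n - 1) (h ^ n * derivativeFun (φ ^ j * g)) with he
  -- d j = 0 for j < k
  have hdvd : (PowerSeries.X : PowerSeries ℂ) ^ k ∣ E := by
    refine dvd_mul_of_dvd_left ?_ _
    exact pow_dvd_pow_of_dvd (dvd_mul_of_dvd_left (PowerSeries.X_dvd_iff.mpr hψ0) _) k
  have hdzero : ∀ j < k, d j = 0 := fun j hj => coeff_zero_of_X_pow_dvd hdvd hj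
  -- extend the sum to range (n+1)
  have hsub : Finset.Icc k n ⊆ Finset.range (n + 1) := by
    intro j hj; rw [Finset.mem_Icc] at hj; rw [Finset.mem_range]; omega
  have hext : ∑ j ∈ Finset.Icc k n, d j * e j = ∑ j ∈ Finset.range (n + 1), d j * e j := by
    refine Finset.sum_subset hsub fun j hj hj2 => ?_
    rw [Finset.mem_range] at hj
    rw [Finset.mem_Icc] at hj2
    rw [hdzero j (by omega), zero_mul]
  -- the sum as a single coefficient
  set P : PowerSeries ℂ := ∑ j ∈ Finset.range (n + 1), PowerSeries.C (d j) * φ ^ j with hP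
  have hsum : ∑ j ∈ Finset.range (n + 1), d j * e j =
      coeff (n - 1) (h ^ n * derivativeFun (P * g)) := by
    rw [hP, Finset.sum_mul]
    have : ∀ j, PowerSeries.C (d j) * φ ^ j * g = PowerSeries.C (d j) * (φ ^ j * g) :=
      fun j => by ring
    simp only [this]
    rw [derivativeFun_sum, Finset.mul_sum, map_sum]
    refine Finset.sum_congr rfl fun j _ => ?_
    rw [derivativeFun_C_mul, mul_left_comm, PowerSeries.coeff_C_mul]
  -- P agrees with psComp E φ up to coeff n
  have hagree : ∀ m ≤ n, coeff m P = coeff m (psComp E φ) := by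
    intro m hm
    rw [hP, map_sum, coeff_psComp]
    simp only [PowerSeries.coeff_C_mul]
    refine (Finset.sum_subset (Finset.range_subset_range.mpr (by omega)) fun j _ hj => ?_).symm
    rw [Finset.mem_range, not_lt] at hj
    rw [coeff_pow_eq_zero hφ0 (Nat.lt_of_succ_le hj), mul_zero]
  -- psComp E φ * g = X^k * (h⁻¹)^k
  have hHc : constantCoeff (psComp h ψ) ≠ 0 := by rw [constantCoeff_psComp]; exact hh
  have hGc : constantCoeff (psComp g ψ) ≠ 0 := by rw [constantCoeff_psComp]; exact hg
  have hcompU : psComp U φ = PowerSeries.X * h⁻¹ := by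
    rw [hU, psComp_mul hφ0, hψφ, psComp_inv hHc hφ0, psComp_assoc hψ0 hφ0, hψφ, psComp_X_right]
  have hcompG : psComp (psComp g ψ)⁻¹ φ = g⁻¹ := by
    rw [psComp_inv hGc hφ0, psComp_assoc hψ0 hφ0, hψφ, psComp_X_right]
  have hcompE : psComp E φ * g = PowerSeries.X ^ k * (h⁻¹) ^ k := by
    rw [hE, psComp_mul hφ0, psComp_pow hφ0, hcompU, hcompG, mul_assoc,
      PowerSeries.inv_mul_cancel _ hg, mul_one, mul_pow]
  -- combine
  rw [hext, hsum, coeff_hn_deriv_congr hn hagree, hcompE]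
  obtain ⟨K, rfl⟩ : ∃ K, k = K + 1 := ⟨k - 1, by omega⟩
  obtain ⟨M, rfl⟩ : ∃ M, n = K + 1 + M := ⟨n - (K + 1), by omega⟩
  rw [show K + 1 + M - 1 = K + M from by omega, key_coeff hh K M]
  push_cast
  rfl

end Aux

namespace Aux2

lemma triMul_assoc (A B C : ℕ → ℕ → ℂ) (k n : ℕ) :
    triMul (triMul A B) C k n = triMul A (triMul B C) k n := by
  simp only [triMul, Finset.sum_mul, Finset.mul_sum]
  calc ∑ j ∈ Finset.Icc k n, ∑ i ∈ Finset.Icc k j, A k i * B i j * C j n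
      = ∑ j ∈ Finset.Icc k n, ∑ i ∈ Finset.Icc k n,
          if i ≤ j then A k i * B i j * C j n else 0 := by
        refine Finset.sum_congr rfl fun j hj => ?_
        rw [Finset.mem_Icc] at hj
        rw [Finset.sum_ite, Finset.sum_const_zero, add_zero]
        refine (Finset.sum_congr ?_ fun _ _ => rfl)
        ext i
        simp only [Finset.mem_filter, Finset.mem_Icc]
        omega
    _ = ∑ i ∈ Finset.Icc k n, ∑ j ∈ Finset.Icc k n,
          if i ≤ j then A k i * B i j * C j n else 0 := Finset.sum_comm
    _ = ∑ i ∈ Finset.Icc k n, ∑ j ∈ Finset.Icc i n, A k i * (B i j * C j n) := by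
        refine Finset.sum_congr rfl fun i hi => ?_
        rw [Finset.mem_Icc] at hi
        rw [Finset.sum_ite, Finset.sum_const_zero, add_zero]
        refine (Finset.sum_congr ?_ fun _ _ => by ring)
        ext j
        simp only [Finset.mem_filter, Finset.mem_Icc]
        omega

def rightInv (A : ℕ → ℕ → ℂ) (k n : ℕ) : ℂ :=
  if k = n then 1 / A k k
  else if k < n then
    (- ∑ j ∈ (Finset.Icc (k + 1) n).attach, A k j.1 * rightInv A j.1 n) / A k k
  else 0
termination_by n - k
decreasing_by
  have := Finset.mem_Icc.mp j.2
  omega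

lemma rightInv_tri (A : ℕ → ℕ → ℂ) {k n : ℕ} (h : n < k) : rightInv A k n = 0 := by
  rw [rightInv, if_neg (by omega), if_neg (by omega)]

lemma rightInv_spec (A : ℕ → ℕ → ℂ) {k n : ℕ} (hAkk : A k k ≠ 0) (hkn : k ≤ n) :
    triMul A (rightInv A) k n = triId k n := by
  unfold triMul triId
  rw [Finset.Icc_eq_cons_Ioc hkn, Finset.sum_cons, ← Finset.Icc_add_one_left_eq_Ioc]
  rcases eq_or_lt_of_le hkn with rfl | hlt
  · rw [if_pos rfl]
    have : Finset.Icc (k + 1) k = ∅ := by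
      apply Finset.Icc_eq_empty; omega
    rw [this, Finset.sum_empty, add_zero, rightInv, if_pos rfl]
    field_simp
  · rw [if_neg (by omega)]
    have hC : rightInv A k n =
        (- ∑ j ∈ (Finset.Icc (k + 1) n).attach, A k j.1 * rightInv A j.1 n) / A k k := by
      rw [rightInv, if_neg (by omega), if_pos hlt]
    rw [hC, Finset.sum_attach (Finset.Icc (k + 1) n) (fun j => A k j * rightInv A j n)]
    field_simp
    ring

lemma triId_triMul_left (C : ℕ → ℕ → ℂ) (htri : ∀ k n, n < k → C k n = 0) (p q : ℕ) :
    ∑ j ∈ Finset.Icc p q, triId p j * C j q = C p q := by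
  rcases le_or_gt p q with hpq | hpq
  · rw [Finset.sum_eq_single p]
    · rw [triId, if_pos rfl, one_mul]
    · intro j hj hjp
      rw [triId, if_neg (fun hh => hjp hh.symm), zero_mul]
    · intro hp
      exact absurd (Finset.mem_Icc.mpr ⟨le_refl p, hpq⟩) hp
  · rw [Finset.Icc_eq_empty (by omega), Finset.sum_empty, (htri p q hpq)]

lemma triMul_triId_right (B : ℕ → ℕ → ℂ) (htri : ∀ k n, n < k → B k n = 0) (p q : ℕ) :
    ∑ j ∈ Finset.Icc p q, B p j * triId j q = B p q := by
  rcases le_or_gt p q with hpq | hpq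
  · rw [Finset.sum_eq_single q]
    · rw [triId, if_pos rfl, mul_one]
    · intro j hj hjq
      rw [triId, if_neg hjq, mul_zero]
    · intro hq
      exact absurd (Finset.mem_Icc.mpr ⟨hpq, le_refl q⟩) hq
  · rw [Finset.Icc_eq_empty (by omega), Finset.sum_empty, (htri p q hpq)]

end Aux2

/-- Theorem: with `ψ = φ^⟨-1⟩` the compositional inverse of `φ`, the matrix `B` with entries
`[B]_{k,n} = (a_k/a_n)·(1/k!)·(d/dt)^n_{t=0}[(ψ(t)/h(ψ(t)))^k · (g(ψ(t)))^{-1}]`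
is a two-sided inverse of `A`. -/
theorem stmt2 (a : ℕ → ℂ) (ha : ∀ n, 1 ≤ n → a n ≠ 0)
    (φ g h : PowerSeries ℂ)
    (hφ0 : constantCoeff φ = 0)
    (hne : constantCoeff (derivativeFun φ) * constantCoeff g * constantCoeff h ≠ 0)
    (ψ : PowerSeries ℂ) (hψ0 : constantCoeff ψ = 0)
    (hψφ : psComp ψ φ = PowerSeries.X) (hφψ : psComp φ ψ = PowerSeries.X)
    (A B : ℕ → ℕ → ℂ)
    (hAtri : ∀ k n, n < k → A k n = 0)
    (hBtri : ∀ k n, n < k → B k n = 0)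
    (hA : ∀ k n, 1 ≤ k → k ≤ n →
      A k n = a k / a n * (1 / k.factorial) *
        (((n - 1).factorial : ℂ) * coeff (n - 1) (h ^ n * derivativeFun (φ ^ k * g))))
    (hB : ∀ k n, 1 ≤ k → k ≤ n →
      B k n = a k / a n * (1 / k.factorial) *
        ((n.factorial : ℂ) * coeff n ((ψ * (psComp h ψ)⁻¹) ^ k * (psComp g ψ)⁻¹))) :
    ∀ k n, 1 ≤ k → 1 ≤ n →
      triMul A B k n = triId k n ∧ triMul B A k n = triId k n := by
  classical
  have hgh : constantCoeff g ≠ 0 ∧ constantCoeff h ≠ 0 := by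
    rw [mul_ne_zero_iff, mul_ne_zero_iff] at hne
    exact ⟨hne.1.2, hne.2⟩
  obtain ⟨hg, hh⟩ := hgh
  -- B * A = I
  have hBA : ∀ k n, 1 ≤ k → 1 ≤ n → triMul B A k n = triId k n := by
    intro k n hk hn
    by_cases hkn : k ≤ n
    · have hstep : ∀ j ∈ Finset.Icc k n, B k j * A j n =
          (a k / a n * (((n - 1).factorial : ℂ) / (k.factorial : ℂ))) *
          (coeff j ((ψ * (psComp h ψ)⁻¹) ^ k * (psComp g ψ)⁻¹) *
           coeff (n - 1) (h ^ n * derivativeFun (φ ^ j * g))) := by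
        intro j hj
        rw [Finset.mem_Icc] at hj
        rw [hB k j hk hj.1, hA j n (le_trans hk hj.1) hj.2]
        have haj := ha j (le_trans hk hj.1)
        have han := ha n hn
        have hjf : (j.factorial : ℂ) ≠ 0 := Nat.cast_ne_zero.mpr j.factorial_ne_zero
        have hkf : (k.factorial : ℂ) ≠ 0 := Nat.cast_ne_zero.mpr k.factorial_ne_zero
        field_simp
      calc triMul B A k n = ∑ j ∈ Finset.Icc k n, B k j * A j n := rfl
        _ = ∑ j ∈ Finset.Icc k n,
            (a k / a n * (((n - 1).factorial : ℂ) / (k.factorial : ℂ))) *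
            (coeff j ((ψ * (psComp h ψ)⁻¹) ^ k * (psComp g ψ)⁻¹) *
             coeff (n - 1) (h ^ n * derivativeFun (φ ^ j * g))) :=
          Finset.sum_congr rfl hstep
        _ = (a k / a n * (((n - 1).factorial : ℂ) / (k.factorial : ℂ))) *
            ∑ j ∈ Finset.Icc k n,
              coeff j ((ψ * (psComp h ψ)⁻¹) ^ k * (psComp g ψ)⁻¹) *
              coeff (n - 1) (h ^ n * derivativeFun (φ ^ j * g)) := by
          rw [Finset.mul_sum]
        _ = (a k / a n * (((n - 1).factorial : ℂ) / (k.factorial : ℂ))) *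
            (if k = n then (k : ℂ) else 0) := by
          rw [Aux.BA_sum hφ0 hψ0 hg hh hψφ hk hkn]
        _ = triId k n := by
          unfold triId
          by_cases hkn2 : k = n
          · subst hkn2
            rw [if_pos rfl, if_pos rfl]
            have han := ha k hk
            have hkf : (k.factorial : ℂ) ≠ 0 := Nat.cast_ne_zero.mpr k.factorial_ne_zero
            have hfac : (((k - 1).factorial : ℂ)) * k = (k.factorial : ℂ) := by
              exact_mod_cast congrArg (Nat.cast : ℕ → ℂ)
                (by rw [mul_comm]; exact Nat.mul_factorial_pred (by omega))
            rw [div_self han, one_mul, div_mul_eq_mul_div, hfac, div_self hkf]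
          · rw [if_neg hkn2, if_neg hkn2, mul_zero]
    · rw [not_le] at hkn
      unfold triMul triId
      rw [Finset.Icc_eq_empty (by omega), Finset.sum_empty, if_neg (by omega)]
  -- diagonal of A is nonzero
  have hdiag : ∀ k, 1 ≤ k → A k k ≠ 0 := by
    intro k hk
    have h1 := hBA k k hk hk
    unfold triMul triId at h1
    rw [Finset.Icc_self, Finset.sum_singleton, if_pos rfl] at h1
    intro h0
    rw [h0, mul_zero] at h1
    exact zero_ne_one h1
  set Cm := Aux2.rightInv A with hCm
  have hCtri : ∀ k n, n < k → Cm k n = 0 := fun k n hkn => Aux2.rightInv_tri A hkn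
  have hAC : ∀ k n, 1 ≤ k → triMul A Cm k n = triId k n := by
    intro k n hk
    rcases le_or_gt k n with hkn | hkn
    · exact Aux2.rightInv_spec A (hdiag k hk) hkn
    · unfold triMul triId
      rw [Finset.Icc_eq_empty (by omega), Finset.sum_empty, if_neg (by omega)]
  have hBC : ∀ p q, 1 ≤ p → B p q = Cm p q := by
    intro p q hp
    have h1 : triMul B (triMul A Cm) p q = B p q := by
      calc triMul B (triMul A Cm) p q
          = ∑ j ∈ Finset.Icc p q, B p j * triMul A Cm j q := rfl
        _ = ∑ j ∈ Finset.Icc p q, B p j * triId j q :=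
          Finset.sum_congr rfl fun j hj => by
            rw [hAC j q (le_trans hp (Finset.mem_Icc.mp hj).1)]
        _ = B p q := Aux2.triMul_triId_right B hBtri p q
    have h2 : triMul (triMul B A) Cm p q = Cm p q := by
      calc triMul (triMul B A) Cm p q
          = ∑ j ∈ Finset.Icc p q, triMul B A p j * Cm j q := rfl
        _ = ∑ j ∈ Finset.Icc p q, triId p j * Cm j q :=
          Finset.sum_congr rfl fun j hj => by
            rw [hBA p j hp (le_trans hp (Finset.mem_Icc.mp hj).1)]
        _ = Cm p q := Aux2.triId_triMul_left Cm hCtri p q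
    rw [← h1, ← Aux2.triMul_assoc B A Cm p q, h2]
  intro k n hk hn
  refine ⟨?_, hBA k n hk hn⟩
  have hABC : triMul A B k n = triMul A Cm k n := by
    unfold triMul
    refine Finset.sum_congr rfl fun j hj => ?_
    rw [hBC j n (le_trans hk (Finset.mem_Icc.mp hj).1)]
  rw [hABC]
  exact hAC k n hk
end
end

section
/- For all integers n ≥ 1 and k ≥ 0, (d/dt)^{n-1}_{t=0}[ h(t)^n · (d/dt)(φ(t)^k·g(t)) ] = (d/dt)^n_{t=0}[ (φ(ω(t)))^k · g(ω(t)) ]. -/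
open PowerSeries Finset

noncomputable section

namespace LagAux

lemma coeff_pow_zero_of_lt {ω : PowerSeries ℂ} (hω0 : constantCoeff ω = 0)
    {j n : ℕ} (h : n < j) : coeff n (ω ^ j) = 0 := by
  obtain ⟨A, hA⟩ : (X : PowerSeries ℂ) ^ j ∣ ω ^ j :=
    pow_dvd_pow_of_dvd (PowerSeries.X_dvd_iff.mpr hω0) j
  rw [hA, PowerSeries.coeff_X_pow_mul', if_neg (by omega)]

lemma coeff_aeval_zero {ω : PowerSeries ℂ} (hω0 : constantCoeff ω = 0)
    {n : ℕ} {D : Polynomial ℂ} (hD : ∀ m ≤ n, D.coeff m = 0) :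
    coeff n (Polynomial.aeval ω D) = 0 := by
  rw [Polynomial.aeval_def, Polynomial.eval₂_eq_sum, Polynomial.sum_def, map_sum]
  refine Finset.sum_eq_zero fun e he => ?_
  have hne : n < e := by
    by_contra hle
    exact Polynomial.mem_support_iff.mp he (hD e (by omega))
  have : (algebraMap ℂ (PowerSeries ℂ)) (D.coeff e) = PowerSeries.C (D.coeff e) := rfl
  rw [this, PowerSeries.coeff_C_mul, coeff_pow_zero_of_lt hω0 hne, mul_zero]

lemma coeff_psComp_eq {ω : PowerSeries ℂ} (hω0 : constantCoeff ω = 0)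
    (F : PowerSeries ℂ) {n N : ℕ} (hN : n < N) :
    coeff n (psComp F ω) = coeff n (Polynomial.aeval ω (trunc N F)) := by
  rw [psComp, coeff_mk, PowerSeries.trunc_apply, map_sum, map_sum]
  have h1 : ∀ m ∈ Finset.Ico 0 N,
      coeff n (Polynomial.aeval ω (Polynomial.monomial m (coeff m F)))
        = coeff m F * coeff n (ω ^ m) := by
    intro m _
    rw [Polynomial.aeval_monomial]
    have : (algebraMap ℂ (PowerSeries ℂ)) (coeff m F) = PowerSeries.C (coeff m F) := rfl
    rw [this, PowerSeries.coeff_C_mul]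
  rw [Finset.sum_congr rfl h1]
  have h2 : Finset.Ico 0 N = Finset.range N := by
    rw [Finset.range_eq_Ico]
  rw [h2]
  apply Finset.sum_subset
  · intro x hx
    simp only [Finset.mem_range] at *
    omega
  · intro x _ hx
    simp only [Finset.mem_range] at hx
    rw [coeff_pow_zero_of_lt hω0 (by omega), mul_zero]

lemma psComp_mul {ω : PowerSeries ℂ} (hω0 : constantCoeff ω = 0)
    (F G : PowerSeries ℂ) : psComp (F * G) ω = psComp F ω * psComp G ω := by
  ext n
  rw [PowerSeries.coeff_mul]
  have key : ∀ p ∈ Finset.HasAntidiagonal.antidiagonal n,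
      coeff p.1 (psComp F ω) * coeff p.2 (psComp G ω)
        = coeff p.1 (Polynomial.aeval ω (trunc (n+1) F))
            * coeff p.2 (Polynomial.aeval ω (trunc (n+1) G)) := by
    intro p hp
    have hp' : p.1 + p.2 = n := Finset.HasAntidiagonal.mem_antidiagonal.mp hp
    rw [coeff_psComp_eq hω0 F (show p.1 < n+1 by omega),
      coeff_psComp_eq hω0 G (show p.2 < n+1 by omega)]
  rw [Finset.sum_congr rfl key, ← PowerSeries.coeff_mul, ← map_mul,
    coeff_psComp_eq hω0 (F * G) (show n < n+1 by omega)]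
  have hD : ∀ m ≤ n,
      (trunc (n+1) F * trunc (n+1) G - trunc (n+1) (F * G)).coeff m = 0 := by
    intro m hm
    rw [Polynomial.coeff_sub, Polynomial.coeff_mul, PowerSeries.coeff_trunc,
      if_pos (show m < n+1 by omega), PowerSeries.coeff_mul]
    rw [Finset.sum_congr rfl (fun p hp => ?_), sub_self]
    have hp' : p.1 + p.2 = m := Finset.HasAntidiagonal.mem_antidiagonal.mp hp
    rw [PowerSeries.coeff_trunc, PowerSeries.coeff_trunc,
      if_pos (show p.1 < n+1 by omega), if_pos (show p.2 < n+1 by omega)]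
  have h0 := coeff_aeval_zero hω0 hD
  rw [map_sub, map_sub, sub_eq_zero] at h0
  exact h0.symm

lemma psComp_one (ω : PowerSeries ℂ) : psComp 1 ω = 1 := by
  ext n
  rw [psComp, coeff_mk]
  have : ∀ j ∈ Finset.range (n+1),
      coeff j (1 : PowerSeries ℂ) * coeff n (ω ^ j)
        = if j = 0 then coeff n (ω ^ j) else 0 := by
    intro j _
    rw [PowerSeries.coeff_one]
    split_ifs <;> simp
  rw [Finset.sum_congr rfl this, Finset.sum_ite_eq' (Finset.range (n+1)) 0,
    if_pos (by simp), pow_zero]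

lemma psComp_pow {ω : PowerSeries ℂ} (hω0 : constantCoeff ω = 0)
    (F : PowerSeries ℂ) (k : ℕ) : psComp (F ^ k) ω = (psComp F ω) ^ k := by
  induction k with
  | zero => simpa using psComp_one ω
  | succ k ih => rw [pow_succ, pow_succ, psComp_mul hω0, ih]

lemma psComp_X {ω : PowerSeries ℂ} (hω0 : constantCoeff ω = 0) :
    psComp X ω = ω := by
  ext n
  rw [psComp, coeff_mk]
  have : ∀ j ∈ Finset.range (n+1),
      coeff j (X : PowerSeries ℂ) * coeff n (ω ^ j)
        = if j = 1 then coeff n (ω ^ j) else 0 := by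
    intro j _
    rw [PowerSeries.coeff_X]
    split_ifs <;> simp
  rw [Finset.sum_congr rfl this, Finset.sum_ite_eq' (Finset.range (n+1)) 1]
  split_ifs with h
  · rw [pow_one]
  · simp only [Finset.mem_range] at h
    have : n = 0 := by omega
    subst this
    rw [coeff_zero_eq_constantCoeff_apply, hω0]

lemma psComp_add (ω F G : PowerSeries ℂ) :
    psComp (F + G) ω = psComp F ω + psComp G ω := by
  ext n
  simp [psComp, add_mul, Finset.sum_add_distrib]

lemma psComp_C_mul (ω F : PowerSeries ℂ) (c : ℂ) :
    psComp (PowerSeries.C c * F) ω = PowerSeries.C c * psComp F ω := by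
  ext n
  simp [psComp, PowerSeries.coeff_C_mul, Finset.mul_sum, mul_assoc]

lemma constantCoeff_psComp (ω F : PowerSeries ℂ) :
    constantCoeff (psComp F ω) = constantCoeff F := by
  rw [← coeff_zero_eq_constantCoeff_apply, ← coeff_zero_eq_constantCoeff_apply,
    psComp, coeff_mk]
  simp

section Main

lemma psi_mul_h {h : PowerSeries ℂ} (hh0 : constantCoeff h ≠ 0) : (X * h⁻¹) * h = X := by
  rw [mul_assoc, PowerSeries.inv_mul_cancel h hh0, mul_one]

lemma psComp_psi {h ω : PowerSeries ℂ} (hh0 : constantCoeff h ≠ 0)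
    (hω0 : constantCoeff ω = 0) (hω : ω = PowerSeries.X * psComp h ω) : psComp (X * h⁻¹) ω = X := by
  have h2 : psComp h ω ≠ 0 := by
    intro H
    apply hh0
    rw [← constantCoeff_psComp ω h, H, map_zero]
  apply mul_right_cancel₀ h2
  rw [← psComp_mul hω0, psi_mul_h hh0, psComp_X hω0]
  exact hω

lemma coeff_derivativeFun' (f : PowerSeries ℂ) (n : ℕ) :
    coeff n (derivativeFun f) = coeff (n + 1) f * (n + 1) := coeff_derivative f n

lemma derivFun_X : derivativeFun (X : PowerSeries ℂ) = 1 := by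
  ext n
  rw [coeff_derivativeFun', PowerSeries.coeff_X, PowerSeries.coeff_one]
  cases n with
  | zero => simp
  | succ n => simp

lemma derivFun_pow (f : PowerSeries ℂ) (m : ℕ) :
    derivativeFun (f ^ (m+1)) = ((m+1 : ℕ) : PowerSeries ℂ) * (f ^ m * derivativeFun f) := by
  induction m with
  | zero => simp
  | succ m ih =>
    rw [pow_succ, derivativeFun_mul, ih, smul_eq_mul, smul_eq_mul]
    push_cast
    ring

lemma deriv_psi_rel {h : PowerSeries ℂ} (hh0 : constantCoeff h ≠ 0) :
    (X * h⁻¹) * derivativeFun h + h * derivativeFun (X * h⁻¹) = 1 := by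
  have := derivativeFun_mul (X * h⁻¹) h
  rw [psi_mul_h hh0, derivFun_X, smul_eq_mul, smul_eq_mul] at this
  exact this.symm

lemma key_j {h : PowerSeries ℂ} (hh0 : constantCoeff h ≠ 0) (j : ℕ) :
    coeff (j+1) (derivativeFun (X * h⁻¹) * h ^ (j+2)) = 0 := by
  have E := deriv_psi_rel hh0
  have e1 : derivativeFun (X * h⁻¹) * h ^ (j+2)
      = h ^ (j+1) - X * (derivativeFun h * h ^ j) := by
    have hsplit : (h : PowerSeries ℂ) ^ (j+2) = h * h ^ (j+1) := by
      rw [← pow_succ']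
    have hsplit2 : (h : PowerSeries ℂ) ^ (j+1) = h * h ^ j := by
      rw [← pow_succ']
    calc derivativeFun (X * h⁻¹) * h ^ (j+2)
        = (h * derivativeFun (X * h⁻¹)) * h ^ (j+1) := by rw [hsplit]; ring
      _ = (1 - (X * h⁻¹) * derivativeFun h) * h ^ (j+1) := by
          rw [← E]; ring
      _ = h ^ (j+1) - ((X * h⁻¹) * h) * (derivativeFun h * h ^ j) := by
          rw [hsplit2]; ring
      _ = h ^ (j+1) - X * (derivativeFun h * h ^ j) := by rw [psi_mul_h hh0]
  rw [e1, map_sub, PowerSeries.coeff_succ_X_mul]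
  have e2 : coeff j (derivativeFun h * h ^ j) = coeff (j+1) (h ^ (j+1)) := by
    have e3 := derivFun_pow h j
    have e4 : coeff j (derivativeFun (h ^ (j+1)))
        = coeff (j+1) (h ^ (j+1)) * (j+1) := coeff_derivativeFun _ j
    rw [e3] at e4
    have e5 : ((j+1 : ℕ) : PowerSeries ℂ) = PowerSeries.C ((j+1 : ℕ) : ℂ) := by
      rw [map_natCast]
    rw [e5, PowerSeries.coeff_C_mul] at e4
    have hj : ((j : ℂ) + 1) ≠ 0 := Nat.cast_add_one_ne_zero j
    push_cast at e4
    have : coeff j (h ^ j * derivativeFun h) = coeff (j+1) (h ^ (j+1)) := by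
      apply mul_left_cancel₀ hj
      linear_combination e4
    rw [mul_comm] at this
    exact this
  rw [e2, sub_self]

lemma P_psi {h ω : PowerSeries ℂ} (hh0 : constantCoeff h ≠ 0)
    (hω0 : constantCoeff ω = 0) (hω : ω = PowerSeries.X * psComp h ω)
    (n : ℕ) (hn : 1 ≤ n) (m : ℕ) (hm : m ≤ n) :
    coeff (n-1) (h ^ n * derivativeFun ((X * h⁻¹) ^ m)) =
      (n : ℂ) * coeff n (psComp ((X * h⁻¹) ^ m) ω) := by
  rw [psComp_pow hω0, psComp_psi hh0 hω0 hω]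
  cases m with
  | zero =>
    rw [pow_zero, pow_zero, derivativeFun_one, mul_zero, map_zero,
      PowerSeries.coeff_one, if_neg (by omega), mul_zero]
  | succ m' =>
    obtain ⟨d, rfl⟩ : ∃ d, n = m' + 1 + d := ⟨n - (m' + 1), by omega⟩
    have key : h ^ (m' + 1 + d) * (X * h⁻¹) ^ m' = X ^ m' * h ^ (d + 1) := by
      rw [show m' + 1 + d = m' + (d + 1) by omega, pow_add]
      calc h ^ m' * h ^ (d+1) * (X * h⁻¹) ^ m'
          = (h * (X * h⁻¹)) ^ m' * h ^ (d+1) := by rw [mul_pow]; ring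
        _ = X ^ m' * h ^ (d+1) := by rw [mul_comm h (X * h⁻¹), psi_mul_h hh0]
    have e : h ^ (m' + 1 + d) * derivativeFun ((X * h⁻¹) ^ (m' + 1))
        = PowerSeries.C ((m' + 1 : ℕ) : ℂ)
            * (X ^ m' * (h ^ (d+1) * derivativeFun (X * h⁻¹))) := by
      rw [derivFun_pow, ← map_natCast (PowerSeries.C) (m' + 1)]
      linear_combination (PowerSeries.C ((m' + 1 : ℕ) : ℂ)
        * derivativeFun (X * h⁻¹)) * key
    rw [show m' + 1 + d - 1 = m' + d by omega, e, PowerSeries.coeff_C_mul,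
      PowerSeries.coeff_X_pow_mul', if_pos (by omega),
      show m' + d - m' = d by omega, PowerSeries.coeff_X_pow]
    cases d with
    | zero =>
      rw [if_pos rfl, pow_one]
      have c1 : coeff 0 (h * derivativeFun (X * h⁻¹))
          = constantCoeff h * ((constantCoeff h)⁻¹) := by
        rw [coeff_zero_eq_constantCoeff_apply, map_mul]
        congr 1
        rw [← coeff_zero_eq_constantCoeff_apply, coeff_derivativeFun',
          PowerSeries.coeff_succ_X_mul, coeff_zero_eq_constantCoeff_apply,
          PowerSeries.constantCoeff_inv]
        push_cast
        ring
      rw [c1, mul_inv_cancel₀ hh0]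
    | succ d' =>
      rw [if_neg (by omega), mul_comm (h ^ (d' + 1 + 1)) (derivativeFun (X * h⁻¹))]
      rw [show d' + 1 + 1 = d' + 2 by rfl, key_j hh0 d']
      ring

lemma main_lemma {h ω : PowerSeries ℂ} (hh0 : constantCoeff h ≠ 0)
    (hω0 : constantCoeff ω = 0) (hω : ω = PowerSeries.X * psComp h ω) (n : ℕ) (hn : 1 ≤ n) (F : PowerSeries ℂ) :
    coeff (n-1) (h ^ n * derivativeFun F) = (n : ℂ) * coeff n (psComp F ω) := by
  have P_add : ∀ F G : PowerSeries ℂ,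
      coeff (n-1) (h ^ n * derivativeFun F) = (n : ℂ) * coeff n (psComp F ω) →
      coeff (n-1) (h ^ n * derivativeFun G) = (n : ℂ) * coeff n (psComp G ω) →
      coeff (n-1) (h ^ n * derivativeFun (F + G))
        = (n : ℂ) * coeff n (psComp (F + G) ω) := by
    intro F G hF hG
    rw [derivativeFun_add, mul_add, map_add, psComp_add, map_add, mul_add, hF, hG]
  have P_Cmul : ∀ (c : ℂ) (F : PowerSeries ℂ),
      coeff (n-1) (h ^ n * derivativeFun F) = (n : ℂ) * coeff n (psComp F ω) →
      coeff (n-1) (h ^ n * derivativeFun (PowerSeries.C c * F))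
        = (n : ℂ) * coeff n (psComp (PowerSeries.C c * F) ω) := by
    intro c F hF
    have hd : derivativeFun (PowerSeries.C c * F) = PowerSeries.C c * derivativeFun F := by
      rw [← smul_eq_C_mul, derivativeFun_smul, smul_eq_C_mul]
    rw [hd, show h ^ n * (PowerSeries.C c * derivativeFun F)
        = PowerSeries.C c * (h ^ n * derivativeFun F) by ring,
      PowerSeries.coeff_C_mul, psComp_C_mul, PowerSeries.coeff_C_mul, hF]
    ring
  suffices H : ∀ (i : ℕ) (F : PowerSeries ℂ),
      (∀ j, j < n + 1 - i → coeff j F = 0) →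
      coeff (n-1) (h ^ n * derivativeFun F) = (n : ℂ) * coeff n (psComp F ω) by
    exact H (n + 1) F (fun j hj => absurd hj (by omega))
  intro i
  induction i with
  | zero =>
    intro F hF
    have hL : coeff (n-1) (h ^ n * derivativeFun F) = 0 := by
      rw [PowerSeries.coeff_mul]
      refine Finset.sum_eq_zero fun p hp => ?_
      have hp' : p.1 + p.2 = n - 1 := Finset.HasAntidiagonal.mem_antidiagonal.mp hp
      rw [coeff_derivativeFun', hF (p.2 + 1) (by omega), zero_mul, mul_zero]
    have hR : coeff n (psComp F ω) = 0 := by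
      rw [psComp, coeff_mk]
      refine Finset.sum_eq_zero fun j hj => ?_
      simp only [Finset.mem_range] at hj
      rw [hF j (by omega), zero_mul]
    rw [hL, hR, mul_zero]
  | succ i ih =>
    intro F hF
    rcases le_or_gt (n + 1) i with hcase | hcase
    · exact ih F (fun j hj => absurd hj (by omega))
    · obtain ⟨m, hm⟩ : ∃ m, m = n - i := ⟨n - i, rfl⟩
      have hFm : ∀ j, j < m → coeff j F = 0 := fun j hj => hF j (by omega)
      have hc : ∃ c : ℂ, c = coeff m F * (constantCoeff h) ^ m :=
        ⟨_, rfl⟩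
      obtain ⟨c, hc⟩ := hc
      have key1 : coeff m ((X * h⁻¹) ^ m) = ((constantCoeff h)⁻¹) ^ m := by
        rw [mul_pow, PowerSeries.coeff_X_pow_mul', if_pos le_rfl, Nat.sub_self,
          coeff_zero_eq_constantCoeff_apply, map_pow, PowerSeries.constantCoeff_inv]
      have hG : ∀ j, j < m + 1 →
          coeff j (F - PowerSeries.C c * (X * h⁻¹) ^ m) = 0 := by
        intro j hj
        rw [map_sub, PowerSeries.coeff_C_mul]
        rcases Nat.lt_or_ge j m with hjm | hjm
        · rw [hFm j hjm, mul_pow, PowerSeries.coeff_X_pow_mul', if_neg (by omega),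
            mul_zero, sub_zero]
        · have hjm' : j = m := by omega
          rw [hjm', key1, hc]
          have hone : (constantCoeff h) ^ m * ((constantCoeff h)⁻¹) ^ m = 1 := by
            rw [← mul_pow, mul_inv_cancel₀ hh0, one_pow]
          linear_combination (-(coeff m F)) * hone
      have PG := ih (F - PowerSeries.C c * (X * h⁻¹) ^ m)
        (fun j hj => hG j (by omega))
      have Pψ := P_psi hh0 hω0 hω n hn m (by omega)
      have PCψ := P_Cmul c _ Pψ
      have Psum := P_add _ _ PCψ PG
      have eq1 : PowerSeries.C c * (X * h⁻¹) ^ m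
          + (F - PowerSeries.C c * (X * h⁻¹) ^ m) = F := by ring
      rwa [eq1] at Psum

end Main

end LagAux

/-- Lagrange inversion identity: for all `n ≥ 1` and `k ≥ 0`,
`(d/dt)^{n-1}_{t=0}[h(t)^n · (d/dt)(φ(t)^k·g(t))] = (d/dt)^n_{t=0}[(φ(ω(t)))^k · g(ω(t))]`,
where `ω` is the unique power series with `ω(0) = 0` and `ω(t) = t·h(ω(t))`. -/
theorem stmt4 (φ g h : PowerSeries ℂ)
    (hφ0 : constantCoeff φ = 0)
    (hh0 : constantCoeff h ≠ 0)
    (ω : PowerSeries ℂ) (hω0 : constantCoeff ω = 0)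
    (hω : ω = PowerSeries.X * psComp h ω)
    (n k : ℕ) (hn : 1 ≤ n) :
    ((n - 1).factorial : ℂ) * coeff (n - 1) (h ^ n * derivativeFun (φ ^ k * g)) =
      (n.factorial : ℂ) * coeff n ((psComp φ ω) ^ k * psComp g ω) := by
  rw [← LagAux.psComp_pow hω0, ← LagAux.psComp_mul hω0,
    LagAux.main_lemma hh0 hω0 hω n hn (φ ^ k * g)]
  obtain ⟨n', rfl⟩ : ∃ n', n = n' + 1 := ⟨n - 1, by omega⟩
  rw [Nat.factorial_succ]
  push_cast
  ring
end
end
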